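/- Let X ∈ ℝ^{n×d}, let S₊, S₋ partition {1,…,n} with sizes n₊ ≥ 1, n₋ ≥ 1, and define the single-user AUC surrogate loss ℓ(w) = (1/(n₊ n₋)) Σ_{p ∈ S₊} Σ_{q ∈ S₋} (1 − wᵀ(x_p − x_q))² for w ∈ ℝ^d, where x_k is the k-th row of X. Then ∇ℓ is Lipschitz continuous with constant 2·n·‖X‖₂² / (n₊ n₋), where n = n₊ + n₋ and ‖X‖₂ is the spectral norm of X. -/

import Mathlib

open Matrix

/-- The spectral norm (largest singular value) of a real matrix. -/
noncomputable def matSpectralNorm {m n : ℕ} (A : Matrix (Fin m) (Fin n) ℝ) : ℝ :=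
  Real.sqrt (⨆ i, (show (Aᵀ * A).IsHermitian by
    simpa using Matrix.isHermitian_conjTranspose_mul_self A).eigenvalues i)

/-- The single-user empirical AUC surrogate loss
`ℓ(w) = (1/(n₊n₋)) Σ_{p∈S₊} Σ_{q∈S₋} (1 − wᵀ(x_p − x_q))²`
of the linear scoring function `f(x) = wᵀx`, where `x_k` is the `k`-th row
of `X`. -/
noncomputable def userLoss {n d : ℕ} (X : Matrix (Fin n) (Fin d) ℝ)
    (Sp Sm : Finset (Fin n)) (w : EuclideanSpace ℝ (Fin d)) : ℝ :=
  (1 / ((Sp.card : ℝ) * (Sm.card : ℝ))) *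
    ∑ p ∈ Sp, ∑ q ∈ Sm, (1 - ∑ k : Fin d, w k * (X p k - X q k)) ^ 2

open scoped RealInnerProductSpace

section Aux

variable {n d : ℕ}

lemma euclid_inner_eq' {k : ℕ} (x y : EuclideanSpace ℝ (Fin k)) :
    ⟪x, y⟫ = ∑ i, x i * y i := by
  simp [PiLp.inner_apply, RCLike.inner_apply, mul_comm]

lemma quad_le {m k : ℕ} (A : Matrix (Fin m) (Fin k) ℝ) (u : EuclideanSpace ℝ (Fin k)) :
    ∑ j : Fin m, ((A *ᵥ ⇑u) j) ^ 2 ≤ matSpectralNorm A ^ 2 * ‖u‖ ^ 2 := by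
  set hB := (show (Aᵀ * A).IsHermitian by
    simpa using Matrix.isHermitian_conjTranspose_mul_self A) with hhB
  set b := hB.eigenvectorBasis with hb
  set lam := hB.eigenvalues with hlam
  set s := ⨆ i, lam i with hs
  have hps : (Aᴴ * A).PosSemidef := Matrix.posSemidef_conjTranspose_mul_self A
  have hlamnn : ∀ i, 0 ≤ lam i := fun i => hps.eigenvalues_nonneg i
  have hle : ∀ i, lam i ≤ s := fun i =>
    le_ciSup (Set.Finite.bddAbove (Set.finite_range _)) i
  have hs0 : 0 ≤ s := by
    rcases isEmpty_or_nonempty (Fin k) with h | h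
    · simp [hs, Real.iSup_of_isEmpty]
    · exact le_trans (hlamnn (Classical.arbitrary _)) (hle _)
  have hspec : matSpectralNorm A ^ 2 = s := Real.sq_sqrt hs0
  -- step 1: LHS = u ⬝ᵥ (AᵀA u)
  have h1 : ⇑u ⬝ᵥ ((Aᴴ * A) *ᵥ ⇑u) = (A *ᵥ ⇑u) ⬝ᵥ (A *ᵥ ⇑u) := by
    rw [Matrix.conjTranspose_eq_transpose_of_trivial,
      ← Matrix.mulVec_mulVec, Matrix.dotProduct_mulVec, Matrix.vecMul_transpose]
  have h2 : ∑ j : Fin m, ((A *ᵥ ⇑u) j) ^ 2 = (A *ᵥ ⇑u) ⬝ᵥ (A *ᵥ ⇑u) := by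
    simp [dotProduct, sq]
  -- step 2: eigen expansion
  have expand : (Aᴴ * A) *ᵥ ⇑u = ⇑(∑ i, (⟪b i, u⟫ * lam i) • b i) := by
    calc (Aᴴ * A) *ᵥ ⇑u = (Aᴴ * A).mulVecLin ⇑(∑ i, ⟪b i, u⟫ • b i) := by
          rw [b.sum_repr' u]; rfl
      _ = ⇑(∑ i, (⟪b i, u⟫ * lam i) • b i) := by
          rw [WithLp.ofLp_sum]; simp only [WithLp.ofLp_smul]
          rw [map_sum]
          show (∑ i, (Aᴴ * A).mulVecLin (⟪b i, u⟫ • ⇑(b i)) : Fin k → ℝ)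
              = ⇑(∑ i, (⟪b i, u⟫ * lam i) • b i)
          have : ∀ i, (Aᴴ * A).mulVecLin (⟪b i, u⟫ • ⇑(b i))
              = (⟪b i, u⟫ * lam i) • ⇑(b i) := by
            intro i
            rw [_root_.map_smul, Matrix.mulVecLin_apply,
              Matrix.conjTranspose_eq_transpose_of_trivial, hB.mulVec_eigenvectorBasis i]
            rw [smul_smul]
          rw [Finset.sum_congr rfl (fun i _ => this i)]
          simp only [WithLp.ofLp_sum, WithLp.ofLp_smul]
  have hquad : ⇑u ⬝ᵥ ((Aᴴ * A) *ᵥ ⇑u) = ∑ i, lam i * ⟪b i, u⟫ ^ 2 := by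
    rw [expand]
    have : ⇑u ⬝ᵥ ⇑(∑ i, (⟪b i, u⟫ * lam i) • b i)
        = ⟪u, ∑ i, (⟪b i, u⟫ * lam i) • b i⟫ := by
      rw [euclid_inner_eq']; rfl
    rw [this, inner_sum]
    refine Finset.sum_congr rfl fun i _ => ?_
    rw [real_inner_smul_right, real_inner_comm u (b i)]
    ring
  -- step 3: bound
  have hsum : ∑ i, lam i * ⟪b i, u⟫ ^ 2 ≤ s * ‖u‖ ^ 2 := by
    have hpar : ∑ i, ⟪b i, u⟫ ^ 2 = ‖u‖ ^ 2 := by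
      have h := b.sum_inner_mul_inner u u
      rw [← real_inner_self_eq_norm_sq]
      rw [← h]
      refine Finset.sum_congr rfl fun i _ => ?_
      rw [real_inner_comm u (b i)]; ring
    calc ∑ i, lam i * ⟪b i, u⟫ ^ 2 ≤ ∑ i, s * ⟪b i, u⟫ ^ 2 :=
          Finset.sum_le_sum fun i _ => mul_le_mul_of_nonneg_right (hle i) (sq_nonneg _)
      _ = s * ‖u‖ ^ 2 := by rw [← Finset.mul_sum, hpar]
  rw [h2, ← h1, hquad, hspec]
  exact hsum

/-- difference of rows as element of Euclidean space -/
def rowDiff (X : Matrix (Fin n) (Fin d) ℝ) (p q : Fin n) : EuclideanSpace ℝ (Fin d) :=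
  WithLp.toLp 2 (fun k => X p k - X q k)

noncomputable def gradExpr (X : Matrix (Fin n) (Fin d) ℝ) (Sp Sm : Finset (Fin n))
    (w : EuclideanSpace ℝ (Fin d)) : EuclideanSpace ℝ (Fin d) :=
  (1 / ((Sp.card : ℝ) * (Sm.card : ℝ))) •
    ∑ pq ∈ Sp ×ˢ Sm, (2 * (⟪rowDiff X pq.1 pq.2, w⟫ - 1)) • rowDiff X pq.1 pq.2

lemma userLoss_eq (X : Matrix (Fin n) (Fin d) ℝ) (Sp Sm : Finset (Fin n)) :
    userLoss X Sp Sm = fun w => (1 / ((Sp.card : ℝ) * (Sm.card : ℝ))) *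
      ∑ pq ∈ Sp ×ˢ Sm, (1 - ⟪rowDiff X pq.1 pq.2, w⟫) ^ 2 := by
  funext w
  unfold userLoss
  rw [Finset.sum_product]
  congr 1

lemma hasGradient_userLoss (X : Matrix (Fin n) (Fin d) ℝ) (Sp Sm : Finset (Fin n))
    (w : EuclideanSpace ℝ (Fin d)) :
    HasGradientAt (userLoss X Sp Sm) (gradExpr X Sp Sm w) w := by
  set c : ℝ := 1 / ((Sp.card : ℝ) * (Sm.card : ℝ))
  set v := rowDiff X
  have hterm : ∀ pq : Fin n × Fin n,
      HasFDerivAt (fun w : EuclideanSpace ℝ (Fin d) => (1 - ⟪v pq.1 pq.2, w⟫) ^ 2)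
        ((2 * (1 - ⟪v pq.1 pq.2, w⟫) ^ 1) • (-(innerSL ℝ (v pq.1 pq.2)))) w := by
    intro pq
    have h1 : HasFDerivAt (fun w : EuclideanSpace ℝ (Fin d) => ⟪v pq.1 pq.2, w⟫)
        (innerSL ℝ (v pq.1 pq.2)) w := (innerSL ℝ (v pq.1 pq.2)).hasFDerivAt
    have h2 := h1.const_sub 1
    have h3 := h2.fun_mul h2
    have h4 : HasFDerivAt (fun w : EuclideanSpace ℝ (Fin d) => (1 - ⟪v pq.1 pq.2, w⟫) ^ 2)
        ((1 - ⟪v pq.1 pq.2, w⟫) • (-(innerSL ℝ (v pq.1 pq.2))) +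
         (1 - ⟪v pq.1 pq.2, w⟫) • (-(innerSL ℝ (v pq.1 pq.2)))) w := by
      simpa only [← pow_two, smul_neg] using h3
    refine h4.congr_fderiv ?_
    rw [pow_one, two_mul, add_smul]
  have hsum := HasFDerivAt.fun_sum (fun pq _ => hterm pq) (u := Sp ×ˢ Sm)
  have hmul := hsum.const_mul c
  rw [userLoss_eq]
  have := hasFDerivAt_iff_hasGradientAt.mp hmul
  convert this using 1
  apply (InnerProductSpace.toDual ℝ (EuclideanSpace ℝ (Fin d))).injective
  rw [LinearIsometryEquiv.apply_symm_apply]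
  ext u
  simp only [InnerProductSpace.toDual_apply_apply, gradExpr]
  rw [real_inner_smul_left, sum_inner]
  simp only [ContinuousLinearMap.coe_smul', Pi.smul_apply, ContinuousLinearMap.coe_sum',
    Finset.sum_apply, ContinuousLinearMap.neg_apply, ContinuousLinearMap.smul_apply,
    innerSL_apply_apply, smul_eq_mul]
  congr 1
  refine Finset.sum_congr rfl fun pq _ => ?_
  rw [real_inner_smul_left]
  ring

lemma Qbound (X : Matrix (Fin n) (Fin d) ℝ) (Sp Sm : Finset (Fin n))
    (hdisj : Disjoint Sp Sm) (hunion : Sp ∪ Sm = Finset.univ)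
    (z : EuclideanSpace ℝ (Fin d)) :
    ∑ pq ∈ Sp ×ˢ Sm, ⟪rowDiff X pq.1 pq.2, z⟫ ^ 2 ≤
      (((Sp.card : ℝ) + (Sm.card : ℝ)) * matSpectralNorm X ^ 2) * ‖z‖ ^ 2 := by
  set c : Fin n → ℝ := fun k => (X *ᵥ ⇑z) k with hc
  have hvz : ∀ p q : Fin n, ⟪rowDiff X p q, z⟫ = c p - c q := by
    intro p q
    rw [euclid_inner_eq']
    simp only [hc, rowDiff, Matrix.mulVec, dotProduct]
    rw [← Finset.sum_sub_distrib]
    refine Finset.sum_congr rfl fun i _ => by ring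
  set A1 : ℝ := ∑ p ∈ Sp, c p
  set B1 : ℝ := ∑ q ∈ Sm, c q
  set A2 : ℝ := ∑ p ∈ Sp, c p ^ 2 with hA2
  set B2 : ℝ := ∑ q ∈ Sm, c q ^ 2 with hB2
  have hexp : ∑ pq ∈ Sp ×ˢ Sm, ⟪rowDiff X pq.1 pq.2, z⟫ ^ 2
      = (Sm.card : ℝ) * A2 - 2 * A1 * B1 + (Sp.card : ℝ) * B2 := by
    rw [Finset.sum_product]
    simp only [hvz, sub_sq]
    simp only [Finset.sum_add_distrib, Finset.sum_sub_distrib, Finset.sum_const,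
      nsmul_eq_mul, Finset.mul_sum, Finset.sum_mul, ← Finset.sum_mul, ← Finset.mul_sum]
    rfl
  have hA2nn : 0 ≤ A2 := Finset.sum_nonneg fun i _ => sq_nonneg _
  have hB2nn : 0 ≤ B2 := Finset.sum_nonneg fun i _ => sq_nonneg _
  have hA1 : A1 ^ 2 ≤ (Sp.card : ℝ) * A2 := by
    simpa using sq_sum_le_card_mul_sum_sq (s := Sp) (f := c)
  have hB1 : B1 ^ 2 ≤ (Sm.card : ℝ) * B2 := by
    simpa using sq_sum_le_card_mul_sum_sq (s := Sm) (f := c)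
  have hcardp : (0:ℝ) ≤ Sp.card := Nat.cast_nonneg _
  have hcardm : (0:ℝ) ≤ Sm.card := Nat.cast_nonneg _
  have hsplit : A2 + B2 = ∑ k : Fin n, c k ^ 2 := by
    rw [hA2, hB2, ← Finset.sum_union hdisj, hunion]
  have hquad : ∑ k : Fin n, c k ^ 2 ≤ matSpectralNorm X ^ 2 * ‖z‖ ^ 2 := quad_le X z
  have key : (Sm.card : ℝ) * A2 - 2 * A1 * B1 + (Sp.card : ℝ) * B2 ≤
      ((Sp.card : ℝ) + (Sm.card : ℝ)) * (A2 + B2) := by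
    have h1 : A1 ^ 2 * B1 ^ 2 ≤ ((Sp.card : ℝ) * A2) * ((Sm.card : ℝ) * B2) :=
      mul_le_mul hA1 hB1 (sq_nonneg _) (by positivity)
    nlinarith [sq_nonneg ((Sp.card : ℝ) * A2 - (Sm.card : ℝ) * B2),
      sq_nonneg (2 * A1 * B1 + (Sp.card : ℝ) * A2 + (Sm.card : ℝ) * B2),
      mul_nonneg hcardp hA2nn, mul_nonneg hcardm hB2nn]
  rw [hexp]
  calc (Sm.card : ℝ) * A2 - 2 * A1 * B1 + (Sp.card : ℝ) * B2
      ≤ ((Sp.card : ℝ) + (Sm.card : ℝ)) * (A2 + B2) := key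
    _ ≤ (((Sp.card : ℝ) + (Sm.card : ℝ)) * matSpectralNorm X ^ 2) * ‖z‖ ^ 2 := by
        rw [hsplit, mul_assoc]
        exact mul_le_mul_of_nonneg_left hquad (by positivity)

noncomputable def Tmap (X : Matrix (Fin n) (Fin d) ℝ) (Sp Sm : Finset (Fin n))
    (u : EuclideanSpace ℝ (Fin d)) : EuclideanSpace ℝ (Fin d) :=
  ∑ pq ∈ Sp ×ˢ Sm, ⟪rowDiff X pq.1 pq.2, u⟫ • rowDiff X pq.1 pq.2

lemma Tbound (X : Matrix (Fin n) (Fin d) ℝ) (Sp Sm : Finset (Fin n))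
    (hdisj : Disjoint Sp Sm) (hunion : Sp ∪ Sm = Finset.univ)
    (u : EuclideanSpace ℝ (Fin d)) :
    ‖Tmap X Sp Sm u‖ ≤ (((Sp.card : ℝ) + (Sm.card : ℝ)) * matSpectralNorm X ^ 2) * ‖u‖ := by
  set K : ℝ := ((Sp.card : ℝ) + (Sm.card : ℝ)) * matSpectralNorm X ^ 2 with hKdef
  have hK : 0 ≤ K := by positivity
  set T : EuclideanSpace ℝ (Fin d) := Tmap X Sp Sm u with hT
  have hCS : ∀ z : EuclideanSpace ℝ (Fin d),
      ⟪z, T⟫ ^ 2 ≤ (∑ pq ∈ Sp ×ˢ Sm, ⟪rowDiff X pq.1 pq.2, u⟫ ^ 2) *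
        ∑ pq ∈ Sp ×ˢ Sm, ⟪rowDiff X pq.1 pq.2, z⟫ ^ 2 := by
    intro z
    have hz : ⟪z, T⟫ = ∑ pq ∈ Sp ×ˢ Sm,
        ⟪rowDiff X pq.1 pq.2, u⟫ * ⟪rowDiff X pq.1 pq.2, z⟫ := by
      rw [hT, Tmap, inner_sum]
      refine Finset.sum_congr rfl fun pq _ => ?_
      rw [real_inner_smul_right, real_inner_comm z]
    rw [hz]
    exact Finset.sum_mul_sq_le_sq_mul_sq _ _ _
  have h1 : (‖T‖ ^ 2) ^ 2 ≤ (K * ‖u‖ ^ 2) * (K * ‖T‖ ^ 2) := by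
    have h := hCS T
    rw [real_inner_self_eq_norm_sq] at h
    refine le_trans h (mul_le_mul (Qbound X Sp Sm hdisj hunion u)
      (Qbound X Sp Sm hdisj hunion T) ?_ ?_)
    · exact Finset.sum_nonneg fun i _ => sq_nonneg _
    · positivity
  rcases eq_or_lt_of_le (norm_nonneg T) with h0 | h0
  · rw [← h0]; positivity
  · have h2 : ‖T‖ ^ 2 ≤ (K * ‖u‖) ^ 2 := by
      nlinarith [mul_pos h0 h0]
    exact (pow_le_pow_iff_left₀ (norm_nonneg T) (mul_nonneg hK (norm_nonneg u))
      two_ne_zero).mp h2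

end Aux

/-- the gradient of the single-user AUC surrogate loss is
Lipschitz continuous with constant `2 n ‖X‖₂² / (n₊ n₋)`, `n = n₊ + n₋`. -/
theorem stmt7 {n d : ℕ} (X : Matrix (Fin n) (Fin d) ℝ)
    (Sp Sm : Finset (Fin n))
    (hdisj : Disjoint Sp Sm) (hunion : Sp ∪ Sm = Finset.univ)
    (hp : 1 ≤ Sp.card) (hm : 1 ≤ Sm.card) :
    ∀ w w' : EuclideanSpace ℝ (Fin d),
      ‖gradient (userLoss X Sp Sm) w - gradient (userLoss X Sp Sm) w'‖ ≤
        (2 * ((Sp.card : ℝ) + (Sm.card : ℝ)) * matSpectralNorm X ^ 2 /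
          ((Sp.card : ℝ) * (Sm.card : ℝ))) * ‖w - w'‖ := by
  intro w w'
  have hcp : (0:ℝ) < Sp.card := by exact_mod_cast hp
  have hcm : (0:ℝ) < Sm.card := by exact_mod_cast hm
  set c : ℝ := 1 / ((Sp.card : ℝ) * (Sm.card : ℝ)) with hcdef
  have hc0 : 0 < c := by positivity
  rw [(hasGradient_userLoss X Sp Sm w).gradient,
    (hasGradient_userLoss X Sp Sm w').gradient]
  have hdiff : gradExpr X Sp Sm w - gradExpr X Sp Sm w'
      = (c * 2) • Tmap X Sp Sm (w - w') := by
    rw [gradExpr, gradExpr, ← smul_sub, ← Finset.sum_sub_distrib, Tmap, Finset.smul_sum,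
      Finset.smul_sum]
    refine Finset.sum_congr rfl fun pq _ => ?_
    rw [← sub_smul, smul_smul, smul_smul]
    congr 1
    rw [inner_sub_right]
    ring
  rw [hdiff]
  rw [norm_smul]
  have habs : ‖c * 2‖ = c * 2 := by
    rw [Real.norm_eq_abs, abs_of_pos (by linarith)]
  rw [habs]
  calc (c * 2) * ‖Tmap X Sp Sm (w - w')‖
      ≤ (c * 2) * ((((Sp.card : ℝ) + (Sm.card : ℝ)) * matSpectralNorm X ^ 2) * ‖w - w'‖) := by
        exact mul_le_mul_of_nonneg_left (Tbound X Sp Sm hdisj hunion (w - w'))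
          (by positivity)
    _ = (2 * ((Sp.card : ℝ) + (Sm.card : ℝ)) * matSpectralNorm X ^ 2 /
          ((Sp.card : ℝ) * (Sm.card : ℝ))) * ‖w - w'‖ := by
        rw [hcdef]
        field_simp
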